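/- More generally, for any list A with a strictly decreasing subsequence of length L, any processing of A through k parallel FIFO queues yields an output whose longest strictly decreasing subsequence has length at least ⌈L/k⌉. -/

import Mathlib

def LDS (a : List ℤ) : ℕ :=
  ((a.sublists.filter (fun l => decide (l.IsChain (· > ·)))).map List.length).foldr max 0

inductive KInterleave : {k : ℕ} → (Fin k → List ℤ) → List ℤ → Prop
  | nil {k : ℕ} : KInterleave (fun _ : Fin k => []) []
  | cons {k : ℕ} (i : Fin k) (x : ℤ) {qs : Fin k → List ℤ} {C : List ℤ} :
      KInterleave qs C → KInterleave (Function.update qs i (x :: qs i)) (x :: C)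

lemma KInterleave.sublist {k : ℕ} {qs : Fin k → List ℤ} {C : List ℤ}
    (h : KInterleave qs C) (i : Fin k) : (qs i).Sublist C := by
  induction h with
  | nil => simp
  | cons j x h ih =>
    rcases eq_or_ne i j with rfl | hne
    · simpa using ih.cons_cons x
    · rw [Function.update_of_ne hne]
      exact ih.trans (List.sublist_cons_self x _)

lemma KInterleave.sum_length {k : ℕ} {qs : Fin k → List ℤ} {C : List ℤ}
    (h : KInterleave qs C) : ∑ i, (qs i).length = C.length := by
  induction h with
  | nil => simp
  | cons j x h ih =>
    rename_i qs' C'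
    simp_rw [Function.apply_update (fun _ (l : List ℤ) => l.length) qs' j (x :: qs' j)]
    rw [Finset.sum_update_of_mem (Finset.mem_univ j)]
    rw [← Finset.add_sum_erase _ _ (Finset.mem_univ j)] at ih
    simp only [List.length_cons, Finset.erase_eq, Finset.sum_erase_eq_sub (Finset.mem_univ j)] at *
    omega

lemma KInterleave.decompose {k : ℕ} {qs : Fin k → List ℤ} {A : List ℤ}
    (h : KInterleave qs A) : ∀ l : List ℤ, l.Sublist A →
    ∃ ls : Fin k → List ℤ, KInterleave ls l ∧ ∀ i, (ls i).Sublist (qs i) := by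
  induction h with
  | nil =>
    intro l hl
    rw [List.sublist_nil] at hl
    subst hl
    exact ⟨fun _ => [], KInterleave.nil, fun i => by simp⟩
  | cons j x h ih =>
    intro l hl
    rw [List.sublist_cons_iff] at hl
    rcases hl with hl | ⟨r, rfl, hr⟩
    · obtain ⟨ls, h1, h2⟩ := ih l hl
      refine ⟨ls, h1, fun i => ?_⟩
      rcases eq_or_ne i j with rfl | hne
      · simpa using (h2 i).trans (List.sublist_cons_self x _)
      · rw [Function.update_of_ne hne]; exact h2 i
    · obtain ⟨ls, h1, h2⟩ := ih r hr
      refine ⟨Function.update ls j (x :: ls j), KInterleave.cons j x h1, fun i => ?_⟩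
      rcases eq_or_ne i j with rfl | hne
      · simpa using (h2 i).cons_cons x
      · rw [Function.update_of_ne hne, Function.update_of_ne hne]; exact h2 i

lemma le_LDS {C l : List ℤ} (hs : l.Sublist C) (hc : l.Chain' (· > ·)) :
    l.length ≤ LDS C := by
  have hmem : l.length ∈ ((C.sublists.filter
      (fun l => decide (l.IsChain (· > ·)))).map List.length) := by
    simp only [List.mem_map, List.mem_filter, List.mem_sublists]
    exact ⟨l, ⟨hs, by have hc' : l.IsChain (· > ·) := hc; simpa using hc'⟩, rfl⟩
  unfold LDS
  generalize ((C.sublists.filter (fun l => decide (l.IsChain (· > ·)))).map List.length) = L at hmem ⊢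
  induction L with
  | nil => simp at hmem
  | cons a L ih =>
    rcases List.mem_cons.mp hmem with rfl | hmem
    · exact le_max_left _ _
    · exact (ih hmem).trans (le_max_right _ _)

/-- if `A` contains a strictly decreasing subsequence of length `L`,
then any processing of `A` through `k` parallel queues outputs a list whose LDS
is at least `⌈L/k⌉`. -/
theorem general_lower_bound (A : List ℤ) (L : ℕ)
    (hL : ∃ l : List ℤ, l.Sublist A ∧ l.Chain' (· > ·) ∧ l.length = L)
    (k : ℕ) (hk : 0 < k) (qs : Fin k → List ℤ) (C : List ℤ)
    (henq : KInterleave qs A) (hdeq : KInterleave qs C) :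
    (L + k - 1) / k ≤ LDS C := by
  obtain ⟨l, hlA, hchain, rfl⟩ := hL
  obtain ⟨ls, hls, hsub⟩ := henq.decompose l hlA
  have hsum : ∑ i, (ls i).length = l.length := hls.sum_length
  -- pigeonhole: some i has k * (ls i).length ≥ l.length
  have : ∃ i ∈ (Finset.univ : Finset (Fin k)), l.length ≤ k * (ls i).length := by
    apply Finset.exists_le_of_sum_le ⟨⟨0, hk⟩, Finset.mem_univ _⟩
    rw [← Finset.mul_sum, hsum]
    simp [Finset.sum_const, Finset.card_univ, mul_comm]
  obtain ⟨i, -, hi⟩ := this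
  have h1 : (ls i).length ≤ LDS C :=
    le_LDS ((hsub i).trans (hdeq.sublist i))
      (hchain.sublist (hls.sublist i))
  refine le_trans ?_ h1
  have := Nat.div_le_div_right (c := k) (Nat.add_le_add hi (Nat.le_refl (k-1)))
  calc (l.length + k - 1) / k = (l.length + (k-1)) / k := by rw [Nat.add_sub_assoc hk]
    _ ≤ (k * (ls i).length + (k-1)) / k := this
    _ = (ls i).length := by
        rw [Nat.mul_add_div hk, Nat.div_eq_of_lt (by omega), Nat.add_zero]
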